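/- For every integer k ≥ 0 and every homogeneous polynomial P of degree k in two variables (y₁, y₂) with real coefficients: ∫₀^{2π} P(cos θ, sin θ) dθ = 0 if and only if there exists a homogeneous polynomial Q of degree k in (y₁, y₂) such that P = y₁·∂Q/∂y₂ − y₂·∂Q/∂y₁. -/

import Mathlib

open MvPolynomial Real

noncomputable section CircAux

namespace CircAux

/-- The rotational derivative as a linear map. -/
def Dop : MvPolynomial (Fin 2) ℝ →ₗ[ℝ] MvPolynomial (Fin 2) ℝ where
  toFun Q := X 0 * pderiv 1 Q - X 1 * pderiv 0 Q
  map_add' p q := by simp only [map_add]; ring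
  map_smul' c p := by
    simp only [Derivation.map_smul, map_smul, RingHom.id_apply, smul_sub, mul_smul_comm]

lemma Dop_apply (Q : MvPolynomial (Fin 2) ℝ) :
    Dop Q = X 0 * pderiv 1 Q - X 1 * pderiv 0 Q := rfl

/-- Evaluation on the unit circle. -/
def ev (Q : MvPolynomial (Fin 2) ℝ) (θ : ℝ) : ℝ := eval ![Real.cos θ, Real.sin θ] Q

lemma ev_add (p q : MvPolynomial (Fin 2) ℝ) (θ : ℝ) : ev (p + q) θ = ev p θ + ev q θ := by
  simp [ev]

lemma hasDerivAt_ev (Q : MvPolynomial (Fin 2) ℝ) (θ : ℝ) :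
    HasDerivAt (ev Q) (ev (Dop Q) θ) θ := by
  induction Q using MvPolynomial.induction_on with
  | C a =>
      have : ev (Dop (C a)) θ = 0 := by
        simp [ev, Dop_apply, pderiv_C]
      rw [this]
      have : ev (C a) = fun _ : ℝ => a := by funext t; simp [ev]
      rw [this]
      exact hasDerivAt_const θ a
  | add p q hp hq =>
      have h := hp.add hq
      have e1 : ev (p + q) = fun t => ev p t + ev q t := by funext t; simp [ev]
      have e2 : ev (Dop (p + q)) θ = ev (Dop p) θ + ev (Dop q) θ := by
        rw [map_add]; simp [ev]
      rw [e1, e2]; exact h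
  | mul_X p i hp =>
      fin_cases i
      · show HasDerivAt (ev (p * X 0)) (ev (Dop (p * X 0)) θ) θ
        have h := hp.mul (Real.hasDerivAt_cos θ)
        have e1 : ev (p * X 0) = fun t => ev p t * Real.cos t := by
          funext t; simp [ev]
        have e2 : ev (Dop (p * X 0)) θ
            = ev (Dop p) θ * Real.cos θ + ev p θ * (-Real.sin θ) := by
          simp only [Dop_apply, pderiv_mul, pderiv_X_self,
            pderiv_X_of_ne (show (0 : Fin 2) ≠ 1 by decide)]
          simp [ev]; ring
        rw [e1, e2]; exact h
      · show HasDerivAt (ev (p * X 1)) (ev (Dop (p * X 1)) θ) θ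
        have h := hp.mul (Real.hasDerivAt_sin θ)
        have e1 : ev (p * X 1) = fun t => ev p t * Real.sin t := by
          funext t; simp [ev]
        have e2 : ev (Dop (p * X 1)) θ
            = ev (Dop p) θ * Real.sin θ + ev p θ * Real.cos θ := by
          simp only [Dop_apply, pderiv_mul, pderiv_X_self,
            pderiv_X_of_ne (show (1 : Fin 2) ≠ 0 by decide)]
          simp [ev]; ring
        rw [e1, e2]; exact h

lemma continuous_ev (Q : MvPolynomial (Fin 2) ℝ) : Continuous (ev Q) :=
  continuous_iff_continuousAt.mpr fun θ => (hasDerivAt_ev Q θ).continuousAt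

lemma intervalIntegrable_ev (Q : MvPolynomial (Fin 2) ℝ) (a b : ℝ) :
    IntervalIntegrable (ev Q) MeasureTheory.volume a b :=
  (continuous_ev Q).intervalIntegrable a b

/-- The circle integral as a linear map. -/
def Iop : MvPolynomial (Fin 2) ℝ →ₗ[ℝ] ℝ where
  toFun Q := ∫ θ in (0:ℝ)..(2 * π), ev Q θ
  map_add' p q := by
    show (∫ θ in (0:ℝ)..(2 * π), ev (p + q) θ)
        = (∫ θ in (0:ℝ)..(2 * π), ev p θ) + ∫ θ in (0:ℝ)..(2 * π), ev q θ
    have : (fun θ => ev (p + q) θ) = fun θ => ev p θ + ev q θ := by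
      funext θ; simp [ev]
    rw [this]
    exact intervalIntegral.integral_add (intervalIntegrable_ev p _ _)
      (intervalIntegrable_ev q _ _)
  map_smul' c p := by
    show (∫ θ in (0:ℝ)..(2 * π), ev (c • p) θ)
        = c • ∫ θ in (0:ℝ)..(2 * π), ev p θ
    have : (fun θ => ev (c • p) θ) = fun θ => c * ev p θ := by
      funext θ; simp [ev, smul_eq_C_mul]
    rw [this, intervalIntegral.integral_const_mul, smul_eq_mul]

lemma Iop_Dop (Q : MvPolynomial (Fin 2) ℝ) : Iop (Dop Q) = 0 := by
  have := intervalIntegral.integral_eq_sub_of_hasDerivAt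
    (f := ev Q) (f' := ev (Dop Q)) (a := (0:ℝ)) (b := 2 * π)
    (fun t _ => hasDerivAt_ev Q t) (intervalIntegrable_ev _ _ _)
  show (∫ θ in (0:ℝ)..(2 * π), ev (Dop Q) θ) = 0
  rw [this]
  simp [ev, Real.cos_two_pi, Real.sin_two_pi]

lemma eval_smul {Q : MvPolynomial (Fin 2) ℝ} {k : ℕ} (h : Q.IsHomogeneous k)
    (c : ℝ) (x : Fin 2 → ℝ) : eval (c • x) Q = c ^ k * eval x Q := by
  rw [eval_eq, eval_eq, Finset.mul_sum]
  refine Finset.sum_congr rfl fun d hd => ?_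
  have hdeg : d.degree = k := by
    by_contra hne
    exact (mem_support_iff.mp hd) (h.coeff_eq_zero hne)
  simp only [Pi.smul_apply, smul_eq_mul, mul_pow]
  rw [Finset.prod_mul_distrib, Finset.prod_pow_eq_pow_sum]
  rw [show ∑ i ∈ d.support, d i = d.degree from rfl, hdeg]
  ring

lemma eq_zero_of_vanish {Q : MvPolynomial (Fin 2) ℝ} {k : ℕ} (h : Q.IsHomogeneous k)
    (hc : ∀ θ, ev Q θ = 0) : Q = 0 := by
  apply h.eq_zero_of_forall_eval_eq_zero
  intro r
  set z : ℂ := ⟨r 0, r 1⟩ with hzdef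
  rcases eq_or_ne z 0 with hz | hz
  · have h0 : r 0 = 0 := congrArg Complex.re hz
    have h1 : r 1 = 0 := congrArg Complex.im hz
    have hr : r = (0:ℝ) • ![Real.cos 0, Real.sin 0] := by
      funext i; fin_cases i <;> simp [h0, h1]
    rw [hr, eval_smul h]
    have := hc 0
    rw [ev] at this
    rw [this, mul_zero]
  · have hs : ‖z‖ ≠ 0 := by
      simpa using hz
    have hcos : Real.cos z.arg = r 0 / ‖z‖ := Complex.cos_arg hz
    have hsin : Real.sin z.arg = r 1 / ‖z‖ := Complex.sin_arg z
    have hr : r = (‖z‖ : ℝ) • ![Real.cos z.arg, Real.sin z.arg] := by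
      funext i; fin_cases i <;>
        simp [hcos, hsin, mul_div_assoc, mul_div_cancel₀, hs, mul_comm,
          div_mul_cancel₀]
    rw [hr, eval_smul h]
    have := hc z.arg
    rw [ev] at this
    rw [this, mul_zero]

lemma ev_const_of_Dop_eq_zero {Q : MvPolynomial (Fin 2) ℝ} (hD : Dop Q = 0) (θ : ℝ) :
    ev Q θ = ev Q 0 := by
  refine is_const_of_deriv_eq_zero (fun t => (hasDerivAt_ev Q t).differentiableAt)
    (fun t => ?_) θ 0
  rw [(hasDerivAt_ev Q t).deriv, hD]
  simp [ev]

lemma pderiv_isHomogeneous {Q : MvPolynomial (Fin 2) ℝ} {n : ℕ}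
    (h : Q.IsHomogeneous (n + 1)) (i : Fin 2) : (pderiv i Q).IsHomogeneous n := by
  classical
  conv_lhs => rw [Q.as_sum]
  rw [map_sum]
  refine IsHomogeneous.sum _ _ _ fun d hd => ?_
  rw [pderiv_monomial]
  rcases Nat.eq_zero_or_pos (d i) with h0 | h0
  · rw [h0]
    simp only [Nat.cast_zero, mul_zero]
    rw [map_zero]
    exact isHomogeneous_zero _ _ _
  · refine isHomogeneous_monomial _ ?_
    have hdd : d.degree = n + 1 := by
      by_contra hne
      exact (mem_support_iff.mp hd) (h.coeff_eq_zero hne)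
    have hle : (Finsupp.single i 1) ≤ d := by
      intro j
      rcases eq_or_ne j i with rfl | hne
      · simpa [Nat.one_le_iff_ne_zero, Nat.pos_iff_ne_zero] using h0
      · simp [Finsupp.single_apply_eq_zero, hne.symm]
    have : d - Finsupp.single i 1 + Finsupp.single i 1 = d := by
      ext j
      rcases eq_or_ne j i with rfl | hne
      · simp [Nat.sub_add_cancel h0]
      · simp [Finsupp.single_apply, hne.symm]
    have hadd : ∀ a b : Fin 2 →₀ ℕ, (a + b).degree = a.degree + b.degree := fun a b => by
      simp only [Finsupp.degree_eq_weight_one, map_add]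
    have hone : (Finsupp.single i (1:ℕ)).degree = 1 := by
      exact Finsupp.degree_single i 1
    have := congrArg Finsupp.degree this
    rw [hadd, hone] at this
    omega

lemma Dop_mem {k : ℕ} {Q : MvPolynomial (Fin 2) ℝ} (hQ : Q.IsHomogeneous k) :
    (Dop Q).IsHomogeneous k := by
  cases k with
  | zero =>
      have hp : ∀ i : Fin 2, pderiv i Q = 0 := by
        intro i
        conv_lhs => rw [Q.as_sum]
        rw [map_sum]
        refine Finset.sum_eq_zero fun d hd => ?_
        have hdd : d.degree = 0 := by
          by_contra hne; exact (mem_support_iff.mp hd) (hQ.coeff_eq_zero hne)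
        have hd0 : d = 0 := (Finsupp.degree_eq_zero_iff d).mp hdd
        rw [pderiv_monomial, hd0]
        simp
      rw [Dop_apply, hp 0, hp 1, mul_zero, mul_zero, sub_zero]
      exact isHomogeneous_zero _ _ _
  | succ n =>
      have h1 : (X (0:Fin 2) * pderiv 1 Q).IsHomogeneous (n+1) := by
        have := (isHomogeneous_X ℝ (0:Fin 2)).mul (pderiv_isHomogeneous hQ 1)
        simpa [Nat.add_comm] using this
      have h0 : (X (1:Fin 2) * pderiv 0 Q).IsHomogeneous (n+1) := by
        have := (isHomogeneous_X ℝ (1:Fin 2)).mul (pderiv_isHomogeneous hQ 0)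
        simpa [Nat.add_comm] using this
      exact h1.sub h0

lemma ev_periodic (Q : MvPolynomial (Fin 2) ℝ) : Function.Periodic (ev Q) (2 * π) := by
  intro t; simp [ev, Real.cos_add_two_pi, Real.sin_add_two_pi]

lemma ev_add_pi {Q : MvPolynomial (Fin 2) ℝ} {k : ℕ} (h : Q.IsHomogeneous k) (θ : ℝ) :
    ev Q (θ + π) = (-1 : ℝ) ^ k * ev Q θ := by
  have hv : (![Real.cos (θ + π), Real.sin (θ + π)] : Fin 2 → ℝ)
      = (-1 : ℝ) • ![Real.cos θ, Real.sin θ] := by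
    funext i; fin_cases i <;> simp [Real.cos_add_pi, Real.sin_add_pi]
  rw [ev, hv, eval_smul h]; rfl

lemma Iop_eq_zero_of_odd {Q : MvPolynomial (Fin 2) ℝ} {k : ℕ} (h : Q.IsHomogeneous k)
    (hk : Odd k) : Iop Q = 0 := by
  have hI : Iop Q = ∫ θ in (0:ℝ)..(2 * π), ev Q θ := rfl
  have h1 : (∫ θ in (0:ℝ)..(2 * π), ev Q (θ + π)) = ∫ θ in (0:ℝ)..(2 * π), ev Q θ := by
    rw [intervalIntegral.integral_comp_add_right (ev Q) π]
    rw [show (0:ℝ) + π = π by ring, show 2 * π + π = π + 2 * π by ring]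
    have := (ev_periodic Q).intervalIntegral_add_eq π 0
    rwa [zero_add] at this
  have h2 : (∫ θ in (0:ℝ)..(2 * π), ev Q (θ + π)) = -∫ θ in (0:ℝ)..(2 * π), ev Q θ := by
    have : (fun θ => ev Q (θ + π)) = fun θ => -(ev Q θ) := by
      funext θ; rw [ev_add_pi h θ, hk.neg_one_pow]; ring
    rw [this, intervalIntegral.integral_neg]
  rw [hI]
  linarith [h1.symm.trans h2]

/-- point evaluation at (1,0) as a linear map -/
def evpt : MvPolynomial (Fin 2) ℝ →ₗ[ℝ] ℝ where
  toFun Q := eval ![(1:ℝ), 0] Q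
  map_add' p q := by simp
  map_smul' c p := by simp [smul_eq_C_mul]

end CircAux
set_option maxHeartbeats 1000000 in
set_option synthInstance.maxHeartbeats 200000 in
open CircAux in
/-- a homogeneous polynomial `P` of degree `k` in two variables has zero
integral over the unit circle if and only if it is the rotational derivative
`y₁·∂Q/∂y₂ − y₂·∂Q/∂y₁` of some homogeneous polynomial `Q` of degree `k`. -/
theorem circle_integral_zero_iff_rotational_derivative (k : ℕ)
    (P : MvPolynomial (Fin 2) ℝ) (hP : P ∈ homogeneousSubmodule (Fin 2) ℝ k) :
    (∫ θ in (0:ℝ)..(2 * π), eval ![Real.cos θ, Real.sin θ] P) = 0 ↔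
      ∃ Q : MvPolynomial (Fin 2) ℝ, Q ∈ homogeneousSubmodule (Fin 2) ℝ k ∧
        P = X 0 * pderiv 1 Q - X 1 * pderiv 0 Q := by
  classical
  set V := homogeneousSubmodule (Fin 2) ℝ k with hV
  haveI : FiniteDimensional ℝ V :=
    Submodule.finiteDimensional_of_le (S₂ := restrictTotalDegree (Fin 2) ℝ k)
      (fun p hp => (mem_restrictTotalDegree _ _ _).mpr
        (MvPolynomial.IsHomogeneous.totalDegree_le hp))
  have hDV : ∀ Q ∈ V, Dop Q ∈ V := fun Q hQ => Dop_mem hQ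
  set Dbar : V →ₗ[ℝ] V := Dop.restrict hDV with hDbar
  set Ibar : V →ₗ[ℝ] ℝ := Iop.comp V.subtype with hIbar
  have hDbar_coe : ∀ x : V, (Dbar x : MvPolynomial (Fin 2) ℝ) = Dop (x : MvPolynomial (Fin 2) ℝ) :=
    fun x => rfl
  have hIbar_coe : ∀ x : V, Ibar x = Iop (x : MvPolynomial (Fin 2) ℝ) := fun x => rfl
  -- range ⊆ ker
  have hsub : LinearMap.range Dbar ≤ LinearMap.ker Ibar := by
    rintro x ⟨y, rfl⟩
    rw [LinearMap.mem_ker, hIbar_coe, hDbar_coe]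
    exact Iop_Dop _
  -- kernel elements vanishing at (1,0) are zero
  have hker0 : ∀ x : V, Dbar x = 0 → eval ![(1:ℝ), 0] (x : MvPolynomial (Fin 2) ℝ) = 0 →
      x = 0 := by
    intro x hx h10
    have hD0 : Dop (x : MvPolynomial (Fin 2) ℝ) = 0 := by
      rw [← hDbar_coe, hx]; rfl
    have hev0 : ev (x : MvPolynomial (Fin 2) ℝ) 0 = 0 := by
      have : (![Real.cos 0, Real.sin 0] : Fin 2 → ℝ) = ![(1:ℝ), 0] := by
        funext i; fin_cases i <;> simp
      rw [ev, this, h10]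
    have hvan : ∀ θ, ev (x : MvPolynomial (Fin 2) ℝ) θ = 0 := fun θ => by
      rw [ev_const_of_Dop_eq_zero hD0 θ, hev0]
    have := eq_zero_of_vanish x.2 hvan
    exact Subtype.ext this
  have key : Module.finrank ℝ (LinearMap.ker Ibar) ≤ Module.finrank ℝ (LinearMap.range Dbar) := by
    have e1 := LinearMap.finrank_range_add_finrank_ker Dbar
    have e2 := LinearMap.finrank_range_add_finrank_ker Ibar
    rcases Nat.even_or_odd k with hk | hk
    · -- k even
      obtain ⟨m, hm⟩ := hk
      -- kernel of Dbar injects into ℝ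
      have hinj : Function.Injective
          ((evpt.comp V.subtype).comp (LinearMap.ker Dbar).subtype) := by
        rw [injective_iff_map_eq_zero]
        intro x hx
        have := hker0 x.1 x.2 hx
        exact Subtype.ext this
      have hkD : Module.finrank ℝ (LinearMap.ker Dbar) ≤ 1 := by
        have := LinearMap.finrank_le_finrank_of_injective hinj
        simpa [Module.finrank_self] using this
      -- Ibar is surjective
      set Rp : MvPolynomial (Fin 2) ℝ := (X 0 ^ 2 + X 1 ^ 2) ^ m with hRp
      have hRpV : Rp ∈ V := by
        rw [hV, mem_homogeneousSubmodule]
        have := ((isHomogeneous_X_pow (R := ℝ) (0 : Fin 2) 2).add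
          (isHomogeneous_X_pow (R := ℝ) (1 : Fin 2) 2)).pow m
        have h2m : 2 * m = k := by omega
        rwa [h2m] at this
      have hIRp : Ibar ⟨Rp, hRpV⟩ = 2 * π := by
        rw [hIbar_coe]
        show (∫ θ in (0:ℝ)..(2 * π), ev Rp θ) = 2 * π
        have : ∀ θ, ev Rp θ = 1 := by
          intro θ
          simp [ev, hRp, Real.cos_sq_add_sin_sq]
        simp only [this]
        simp
      have hrange : LinearMap.range Ibar = ⊤ := by
        rw [Submodule.eq_top_iff']
        intro y
        refine ⟨(y / (2 * π)) • ⟨Rp, hRpV⟩, ?_⟩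
        rw [map_smul, hIRp, smul_eq_mul, div_mul_cancel₀]
        positivity
      have hrI : Module.finrank ℝ (LinearMap.range Ibar) = 1 := by
        rw [hrange, finrank_top, Module.finrank_self]
      omega
    · -- k odd
      have hkD : LinearMap.ker Dbar = ⊥ := by
        rw [Submodule.eq_bot_iff]
        intro x hx
        rw [LinearMap.mem_ker] at hx
        apply hker0 x hx
        have hD0 : Dop (x : MvPolynomial (Fin 2) ℝ) = 0 := by
          rw [← hDbar_coe, hx]; rfl
        have h1 : ev (x : MvPolynomial (Fin 2) ℝ) π = ev (x : MvPolynomial (Fin 2) ℝ) 0 :=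
          ev_const_of_Dop_eq_zero hD0 π
        have h2 : ev (x : MvPolynomial (Fin 2) ℝ) π
            = -(ev (x : MvPolynomial (Fin 2) ℝ) 0) := by
          have := ev_add_pi x.2 0
          rw [zero_add] at this
          rw [this, hk.neg_one_pow]; ring
        have h0 : ev (x : MvPolynomial (Fin 2) ℝ) 0 = 0 := by linarith [h1.symm.trans h2]
        have : (![Real.cos 0, Real.sin 0] : Fin 2 → ℝ) = ![(1:ℝ), 0] := by
          funext i; fin_cases i <;> simp
        rw [ev, this] at h0
        exact h0
      have hkerI : LinearMap.ker Ibar = ⊤ := by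
        rw [LinearMap.ker_eq_top]
        ext x
        rw [hIbar_coe]
        exact Iop_eq_zero_of_odd x.2 hk
      have hb : Module.finrank ℝ (LinearMap.ker Dbar) = 0 := by
        rw [hkD, finrank_bot]
      have ht : Module.finrank ℝ (LinearMap.ker Ibar) = Module.finrank ℝ V := by
        rw [hkerI, finrank_top]
      omega
  have heq : LinearMap.range Dbar = LinearMap.ker Ibar :=
    Submodule.eq_of_le_of_finrank_le hsub key
  have hmem : ((∫ θ in (0:ℝ)..(2 * π), eval ![Real.cos θ, Real.sin θ] P) = 0)
      ↔ (⟨P, hP⟩ : V) ∈ LinearMap.ker Ibar := by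
    rw [LinearMap.mem_ker, hIbar_coe]
    exact Iff.rfl
  rw [hmem, ← heq]
  constructor
  · rintro ⟨y, hy⟩
    refine ⟨(y : MvPolynomial (Fin 2) ℝ), y.2, ?_⟩
    have h : Dop (y : MvPolynomial (Fin 2) ℝ) = P := by
      have h' := congrArg (Subtype.val) hy
      rw [hDbar_coe] at h'
      exact h'
    rw [← h]
    rfl
  · rintro ⟨Q, hQ, hPQ⟩
    refine ⟨⟨Q, hQ⟩, ?_⟩
    apply Subtype.ext
    rw [hDbar_coe]
    show Dop Q = P
    rw [hPQ]
    rfl
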